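/- For every non-complete simple graph G, the algebraic connectivity satisfies μ_2(G) ≤ κ(G). -/

import Mathlib

open Matrix BigOperators Finset

open scoped Classical in
noncomputable def adjMat {V : Type*} [Fintype V] (G : SimpleGraph V) : Matrix V V ℝ :=
  Matrix.of fun a b => if G.Adj a b then (1 : ℝ) else 0

/-- The degree of a vertex. -/
noncomputable def deg {V : Type*} [Fintype V] (G : SimpleGraph V) (v : V) : ℕ :=
  (G.neighborSet v).ncard

/-- The Laplacian matrix `D - A`. -/
noncomputable def lapMat {V : Type*} [Fintype V] [DecidableEq V] (G : SimpleGraph V) :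
    Matrix V V ℝ :=
  Matrix.diagonal (fun v => ((deg G v : ℝ))) - adjMat G

/-- The algebraic connectivity `μ₂(G)`: the second smallest Laplacian eigenvalue, via the
Courant–Fischer characterization as the minimum of the Rayleigh quotient over unit vectors
orthogonal to the all-ones vector. -/
noncomputable def mu2 {n : ℕ} (G : SimpleGraph (Fin n)) : ℝ :=
  sInf {r : ℝ | ∃ x : Fin n → ℝ,
    (∑ v, (x v) ^ 2 = 1) ∧ (∑ v, x v = 0) ∧ r = x ⬝ᵥ (lapMat G *ᵥ x)}

/-- Reachability from `u` to `v` by a path staying inside the set `T`. -/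
def gReachIn {V : Type*} (G : SimpleGraph V) (T : Set V) (u v : V) : Prop :=
  Relation.ReflTransGen (fun a b => a ∈ T ∧ b ∈ T ∧ G.Adj a b) u v

/-- `S` is a vertex cut: `G - S` is disconnected. -/
def IsCutG {V : Type*} (G : SimpleGraph V) (S : Finset V) : Prop :=
  ∃ u v : V, u ∉ S ∧ v ∉ S ∧ ¬ gReachIn G {x | x ∉ S} u v

/-- The vertex connectivity of `G`: the minimum size of a vertex cut. -/
noncomputable def vconn {V : Type*} [Fintype V] (G : SimpleGraph V) : ℕ :=
  sInf {s : ℕ | ∃ S : Finset V, S.card = s ∧ IsCutG G S}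

open scoped Classical in
lemma deg_eq_sum {n : ℕ} (G : SimpleGraph (Fin n)) (v : Fin n) :
    (deg G v : ℝ) = ∑ w, (if G.Adj v w then (1:ℝ) else 0) := by
  classical
  rw [Finset.sum_boole]
  congr 1
  rw [deg, Set.ncard_eq_toFinset_card']
  congr 1
  ext w
  simp [SimpleGraph.neighborSet]
  exact Set.mem_toFinset

open scoped Classical in
lemma quad_eq {n : ℕ} (G : SimpleGraph (Fin n)) (x : Fin n → ℝ) :
    x ⬝ᵥ (lapMat G *ᵥ x)
      = (1/2) * ∑ v, ∑ w, (if G.Adj v w then (1:ℝ) else 0) * (x v - x w)^2 := by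
  classical
  have L1 : x ⬝ᵥ (lapMat G *ᵥ x)
      = ∑ v, ((deg G v : ℝ) * x v ^ 2)
          - ∑ v, ∑ w, (if G.Adj v w then (1:ℝ) else 0) * (x v * x w) := by
    rw [← Finset.sum_sub_distrib]
    simp only [lapMat, adjMat, dotProduct, mulVec, Matrix.sub_apply, Matrix.diagonal_apply,
      Matrix.of_apply]
    refine Finset.sum_congr rfl fun v _ => ?_
    rw [Finset.mul_sum]
    rw [show (fun w => x v * ((((if v = w then (deg G v : ℝ) else 0)
            - if G.Adj v w then 1 else 0)) * x w))
        = (fun w => (if v = w then (deg G v : ℝ) * (x v * x w) else 0)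
            - (if G.Adj v w then (1:ℝ) else 0) * (x v * x w)) from ?_]
    · rw [Finset.sum_sub_distrib, Finset.sum_ite_eq]
      simp only [Finset.mem_univ, if_pos]
      congr 1
      ring
    · funext w
      by_cases h : v = w <;> by_cases h2 : G.Adj v w <;> simp [h, h2] <;> ring
  have h1 : ∑ v, ∑ w, (if G.Adj v w then (1:ℝ) else 0) * x v ^ 2
      = ∑ v, (deg G v : ℝ) * x v ^ 2 := by
    refine Finset.sum_congr rfl fun v _ => ?_
    rw [← Finset.sum_mul, ← deg_eq_sum]
  have h2 : ∑ v, ∑ w, (if G.Adj v w then (1:ℝ) else 0) * x w ^ 2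
      = ∑ v, (deg G v : ℝ) * x v ^ 2 := by
    rw [Finset.sum_comm]
    refine Finset.sum_congr rfl fun w _ => ?_
    have : ∀ v, (if G.Adj v w then (1:ℝ) else 0) = (if G.Adj w v then (1:ℝ) else 0) := by
      intro v; simp [G.adj_comm]
    simp only [this]
    rw [← Finset.sum_mul, ← deg_eq_sum]
  have key : ∑ v, ∑ w, (if G.Adj v w then (1:ℝ) else 0) * (x v - x w)^2
      = ∑ v, ((deg G v : ℝ) * x v ^ 2) + ∑ v, ((deg G v : ℝ) * x v ^ 2)
        - 2 * ∑ v, ∑ w, (if G.Adj v w then (1:ℝ) else 0) * (x v * x w) := by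
    have e : ∀ v w : Fin n, (if G.Adj v w then (1:ℝ) else 0) * (x v - x w)^2
        = (if G.Adj v w then (1:ℝ) else 0) * x v ^ 2
          + (if G.Adj v w then (1:ℝ) else 0) * x w ^ 2
          - 2 * ((if G.Adj v w then (1:ℝ) else 0) * (x v * x w)) := by
      intro v w; ring
    simp only [e, Finset.sum_sub_distrib, Finset.sum_add_distrib, Finset.mul_sum]
    rw [h1, h2]
  rw [L1, key]
  ring

/-- Fiedler: for every non-complete graph, `μ₂(G) ≤ κ(G)`. -/
theorem stmt18 {n : ℕ} (G : SimpleGraph (Fin n))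
    (hnc : ∃ u v : Fin n, u ≠ v ∧ ¬ G.Adj u v) :
    mu2 G ≤ (vconn G : ℝ) := by
  classical
  obtain ⟨u0, v0, huv0, hadj0⟩ := hnc
  -- the set of cut sizes is nonempty
  have hne : {s : ℕ | ∃ S : Finset (Fin n), S.card = s ∧ IsCutG G S}.Nonempty := by
    refine ⟨(Finset.univ \ {u0, v0}).card, Finset.univ \ {u0, v0}, rfl, u0, v0, ?_, ?_, ?_⟩
    · simp
    · simp
    · intro h
      have key : ∀ z, gReachIn G {x | x ∉ (Finset.univ \ ({u0, v0} : Finset (Fin n)))} u0 z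
          → z = u0 := by
        intro z hz
        induction hz with
        | refl => rfl
        | tail _ hstep ih =>
          obtain ⟨hb, hc, hadj⟩ := hstep
          subst ih
          simp only [Set.mem_setOf_eq, Finset.mem_sdiff, Finset.mem_univ, true_and, not_not,
            Finset.mem_insert, Finset.mem_singleton] at hc
          rcases hc with rfl | rfl
          · exact absurd hadj (G.irrefl)
          · exact absurd hadj hadj0
      exact huv0 ((key v0 h).symm)
  obtain ⟨S, hScard, u, v, hu, hv, hreach⟩ := Nat.sInf_mem hne
  set T : Set (Fin n) := {x | x ∉ S} with hT
  set SA : Finset (Fin n) := Finset.univ.filter (fun z => z ∉ S ∧ gReachIn G T u z) with hSA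
  set SB : Finset (Fin n) := Finset.univ.filter (fun z => z ∉ S ∧ ¬ gReachIn G T u z) with hSB
  have huA : u ∈ SA := by
    simp only [hSA, Finset.mem_filter, Finset.mem_univ, true_and]
    exact ⟨hu, Relation.ReflTransGen.refl⟩
  have hvB : v ∈ SB := by
    simp only [hSB, Finset.mem_filter, Finset.mem_univ, true_and]
    exact ⟨hv, hreach⟩
  set a : ℝ := (SA.card : ℝ) with ha'
  set b : ℝ := (SB.card : ℝ) with hb'
  have ha : 0 < a := by
    have h0 : 0 < SA.card := Finset.card_pos.2 ⟨u, huA⟩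
    rw [ha']; exact_mod_cast h0
  have hb : 0 < b := by
    have h0 : 0 < SB.card := Finset.card_pos.2 ⟨v, hvB⟩
    rw [hb']; exact_mod_cast h0
  set t : ℝ := 1/a + 1/b with ht'
  have ht : 0 < t := by
    rw [ht']
    exact add_pos (one_div_pos.2 ha) (one_div_pos.2 hb)
  set c : ℝ := (Real.sqrt t)⁻¹ with hc'
  have hc2 : c^2 = t⁻¹ := by
    rw [hc', ← Real.sqrt_inv]
    exact Real.sq_sqrt (inv_nonneg.2 ht.le)
  set x : Fin n → ℝ := fun z => if z ∈ SA then c/a else if z ∈ SB then -(c/b) else 0 with hx'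
  clear_value x
  clear_value c
  clear_value t
  clear_value a
  clear_value b
  -- basic facts
  have hABdisj : ∀ z, z ∈ SA → z ∉ SB := by
    intro z hzA hzB
    simp only [hSA, hSB, Finset.mem_filter] at hzA hzB
    exact hzB.2.2 hzA.2.2
  have hxS : ∀ z ∈ S, x z = 0 := by
    intro z hz
    have h1 : z ∉ SA := by simp only [hSA, Finset.mem_filter]; tauto
    have h2 : z ∉ SB := by simp only [hSB, Finset.mem_filter]; tauto
    simp [hx', h1, h2]
  have hcover : ∀ z, z ∉ S → z ∈ SA ∨ z ∈ SB := by
    intro z hz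
    by_cases h : gReachIn G T u z
    · left; simp only [hSA, Finset.mem_filter, Finset.mem_univ, true_and]; exact ⟨hz, h⟩
    · right; simp only [hSB, Finset.mem_filter, Finset.mem_univ, true_and]; exact ⟨hz, h⟩
  have hxsq : ∀ z, x z ^ 2
      = (if z ∈ SA then (c/a)^2 else 0) + (if z ∈ SB then (c/b)^2 else 0) := by
    intro z
    by_cases h1 : z ∈ SA
    · simp [hx', h1, hABdisj z h1]
    · by_cases h2 : z ∈ SB <;> simp [hx', h1, h2]
  have hxval : ∀ z, x z
      = (if z ∈ SA then (c/a) else 0) + (if z ∈ SB then -(c/b) else 0) := by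
    intro z
    by_cases h1 : z ∈ SA
    · simp [hx', h1, hABdisj z h1]
    · by_cases h2 : z ∈ SB <;> simp [hx', h1, h2]
  have hsumsq : ∑ z, x z ^ 2 = 1 := by
    simp only [hxsq]
    rw [Finset.sum_add_distrib, Finset.sum_ite_mem, Finset.sum_ite_mem,
      Finset.univ_inter, Finset.univ_inter, Finset.sum_const, Finset.sum_const,
      nsmul_eq_mul, nsmul_eq_mul]
    rw [← ha', ← hb']
    have : a * (c/a)^2 + b * (c/b)^2 = c^2 * t := by
      rw [ht']; field_simp
    rw [this, hc2, inv_mul_cancel₀ (ne_of_gt ht)]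
  have hsum0 : ∑ z, x z = 0 := by
    simp only [hxval]
    rw [Finset.sum_add_distrib, Finset.sum_ite_mem, Finset.sum_ite_mem,
      Finset.univ_inter, Finset.univ_inter, Finset.sum_const, Finset.sum_const,
      nsmul_eq_mul, nsmul_eq_mul]
    rw [← ha', ← hb']
    field_simp
    ring
  -- membership in the mu2 set
  have hmem : x ⬝ᵥ (lapMat G *ᵥ x) ∈ {r : ℝ | ∃ y : Fin n → ℝ,
      (∑ z, (y z) ^ 2 = 1) ∧ (∑ z, y z = 0) ∧ r = y ⬝ᵥ (lapMat G *ᵥ y)} :=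
    ⟨x, hsumsq, hsum0, rfl⟩
  -- bounded below by 0
  have hbdd : BddBelow {r : ℝ | ∃ y : Fin n → ℝ,
      (∑ z, (y z) ^ 2 = 1) ∧ (∑ z, y z = 0) ∧ r = y ⬝ᵥ (lapMat G *ᵥ y)} := by
    refine ⟨0, fun r hr => ?_⟩
    obtain ⟨y, _, _, rfl⟩ := hr
    rw [quad_eq]
    have : (0:ℝ) ≤ ∑ v, ∑ w, (if G.Adj v w then (1:ℝ) else 0) * (y v - y w)^2 := by
      refine Finset.sum_nonneg fun v _ => Finset.sum_nonneg fun w _ => ?_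
      positivity
    linarith
  have hle : mu2 G ≤ x ⬝ᵥ (lapMat G *ᵥ x) := csInf_le hbdd hmem
  -- bound the Rayleigh quotient by |S|
  have hbound : x ⬝ᵥ (lapMat G *ᵥ x) ≤ (S.card : ℝ) := by
    rw [quad_eq]
    have hpt : ∀ v w : Fin n, (if G.Adj v w then (1:ℝ) else 0) * (x v - x w)^2
        ≤ (if v ∈ S then x w ^ 2 else 0) + (if w ∈ S then x v ^ 2 else 0) := by
      intro p q
      by_cases hp : p ∈ S
      · have hx0 : x p = 0 := hxS p hp
        by_cases hadj : G.Adj p q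
        · simp only [hadj, if_true, hx0, if_pos hp]
          have : (0 - x q)^2 = x q ^ 2 := by ring
          rw [one_mul, this]
          have h2 : (0:ℝ) ≤ if q ∈ S then (0:ℝ)^2 else 0 := by positivity
          linarith
        · simp only [hadj, if_false, zero_mul]
          positivity
      · by_cases hq : q ∈ S
        · have hx0 : x q = 0 := hxS q hq
          by_cases hadj : G.Adj p q
          · simp only [hadj, if_true, hx0, if_pos hq, if_neg hp]
            have h1 : (x p - 0)^2 = x p ^ 2 := by ring
            rw [one_mul, h1]
            linarith
          · simp only [hadj, if_false, zero_mul]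
            positivity
        · simp only [if_neg hp, if_neg hq, add_zero]
          by_cases hadj : G.Adj p q
          · -- both outside S, adjacent: same side, so x p = x q
            have hsame : x p = x q := by
              rcases hcover p hp with hpA | hpB
              · rcases hcover q hq with hqA | hqB
                · simp [hx', hpA, hqA]
                · exfalso
                  have hreachq : gReachIn G T u q := by
                    have hpr : gReachIn G T u p := by
                      simp only [hSA, Finset.mem_filter] at hpA
                      exact hpA.2.2
                    exact hpr.tail ⟨hp, hq, hadj⟩
                  simp only [hSB, Finset.mem_filter] at hqB
                  exact hqB.2.2 hreachq
              · rcases hcover q hq with hqA | hqB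
                · exfalso
                  have hreachp : gReachIn G T u p := by
                    have hqr : gReachIn G T u q := by
                      simp only [hSA, Finset.mem_filter] at hqA
                      exact hqA.2.2
                    exact hqr.tail ⟨hq, hp, hadj.symm⟩
                  simp only [hSB, Finset.mem_filter] at hpB
                  exact hpB.2.2 hreachp
                · have hpA' : p ∉ SA := fun h => hABdisj p h hpB
                  have hqA' : q ∉ SA := fun h => hABdisj q h hqB
                  simp [hx', hpA', hqA', hpB, hqB]
            simp [hadj, hsame]
          · simp [hadj]
      -- end hpt
    have hsum : ∑ v, ∑ w, (if G.Adj v w then (1:ℝ) else 0) * (x v - x w)^2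
        ≤ ∑ v, ∑ w : Fin n, ((if v ∈ S then x w ^ 2 else 0) + (if w ∈ S then x v ^ 2 else 0)) :=
      Finset.sum_le_sum fun v _ => Finset.sum_le_sum fun w _ => hpt v w
    have hrhs : ∑ v, ∑ w : Fin n, ((if v ∈ S then x w ^ 2 else 0) + (if w ∈ S then x v ^ 2 else 0))
        = 2 * (S.card : ℝ) := by
      simp only [Finset.sum_add_distrib]
      have e1 : ∑ v, ∑ w, (if v ∈ S then x w ^ 2 else 0) = (S.card : ℝ) := by
        have : ∀ v : Fin n, ∑ w, (if v ∈ S then x w ^ 2 else 0)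
            = (if v ∈ S then (1:ℝ) else 0) := by
          intro v
          by_cases h : v ∈ S <;> simp [h, hsumsq]
        simp only [this]
        rw [Finset.sum_ite_mem, Finset.univ_inter, Finset.sum_const, nsmul_eq_mul, mul_one]
      have e2 : ∑ v, ∑ w, (if w ∈ S then x v ^ 2 else 0) = (S.card : ℝ) := by
        have : ∀ v : Fin n, ∑ w, (if w ∈ S then x v ^ 2 else 0) = (S.card : ℝ) * x v ^ 2 := by
          intro v
          rw [Finset.sum_ite_mem, Finset.univ_inter, Finset.sum_const, nsmul_eq_mul]
        simp only [this]
        rw [← Finset.mul_sum, hsumsq, mul_one]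
      rw [e1, e2]; ring
    rw [hrhs] at hsum
    linarith
  have hSv : S.card = vconn G := hScard
  have : (S.card : ℝ) = (vconn G : ℝ) := by exact_mod_cast hSv
  calc mu2 G ≤ x ⬝ᵥ (lapMat G *ᵥ x) := hle
    _ ≤ (S.card : ℝ) := hbound
    _ = (vconn G : ℝ) := this
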